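/- Let A ⊆ 𝔽₂ⁿ have density α = 𝔼 1_A, let δ, ε ∈ (0,1), set ρ := (ε/2)^{1/2} and H := Spec_ρ(A)^⊥, where Spec_ρ(A) = {r : |1̂_A(r)| ≥ ρα}. Define ν⁽⁴⁾ := 1_A ∗ 1_A ∗ 1_A ∗ 1_A and S_η := {x : ν⁽⁴⁾(x) ≥ ηα³}. Then S_δ + H ⊆ S_{δ−ε}. -/
import Mathlib


open scoped Classical
open Finset

noncomputable def ft {n : ℕ} (f : (Fin n → ZMod 2) → ℝ) (r : Fin n → ZMod 2) : ℝ :=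
  (∑ x : Fin n → ZMod 2, f x * (-1 : ℝ) ^ (∑ i, r i * x i).val) /
    (Fintype.card (Fin n → ZMod 2))

noncomputable def aNorm {n : ℕ} (f : (Fin n → ZMod 2) → ℝ) : ℝ := ∑ r : Fin n → ZMod 2, |ft f r|

noncomputable def cnv {n : ℕ} (f g : (Fin n → ZMod 2) → ℝ) (x : Fin n → ZMod 2) : ℝ :=
  (∑ y : Fin n → ZMod 2, f y * g (x - y)) / (Fintype.card (Fin n → ZMod 2))

noncomputable def ind {n : ℕ} (A : Finset (Fin n → ZMod 2)) (x : Fin n → ZMod 2) : ℝ :=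
  if x ∈ A then 1 else 0

noncomputable def density {n : ℕ} (A : Finset (Fin n → ZMod 2)) : ℝ :=
  (A.card : ℝ) / (Fintype.card (Fin n → ZMod 2))

noncomputable def chi {n : ℕ} (r x : Fin n → ZMod 2) : ℝ := (-1) ^ (∑ i, r i * x i).val

lemma neg_one_pow_mod_two (k : ℕ) : (-1 : ℝ) ^ (k % 2) = (-1) ^ k := by
  conv_rhs => rw [← Nat.div_add_mod k 2]
  rw [pow_add, pow_mul]
  norm_num

lemma chi_val_add (a b : ZMod 2) : (-1 : ℝ) ^ ((a + b).val) = (-1) ^ a.val * (-1) ^ b.val := by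
  rw [ZMod.val_add, neg_one_pow_mod_two, pow_add]

lemma chi_add_right {n : ℕ} (r x y : Fin n → ZMod 2) : chi r (x + y) = chi r x * chi r y := by
  unfold chi
  have h : (∑ i, r i * (x + y) i) = (∑ i, r i * x i) + (∑ i, r i * y i) := by
    rw [← Finset.sum_add_distrib]
    exact Finset.sum_congr rfl fun i _ => by simp [mul_add]
  rw [h, chi_val_add]

lemma chi_add_left {n : ℕ} (r s x : Fin n → ZMod 2) : chi (r + s) x = chi r x * chi s x := by
  unfold chi
  have h : (∑ i, (r + s) i * x i) = (∑ i, r i * x i) + (∑ i, s i * x i) := by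
    rw [← Finset.sum_add_distrib]
    exact Finset.sum_congr rfl fun i _ => by simp [add_mul]
  rw [h, chi_val_add]

lemma abs_chi {n : ℕ} (r x : Fin n → ZMod 2) : |chi r x| = 1 := by
  unfold chi; rw [abs_pow, abs_neg, abs_one, one_pow]

lemma sum_chi {n : ℕ} (z : Fin n → ZMod 2) :
    ∑ r : Fin n → ZMod 2, chi r z
      = if z = 0 then (Fintype.card (Fin n → ZMod 2) : ℝ) else 0 := by
  split_ifs with hz
  · subst hz
    have : ∀ r : Fin n → ZMod 2, chi r 0 = 1 := by
      intro r; unfold chi; simp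
    simp [this]
  · obtain ⟨j, hj⟩ : ∃ j, z j ≠ 0 := by
      by_contra hc; push_neg at hc; exact hz (funext hc)
    set e : Fin n → ZMod 2 := Pi.single j 1 with he
    have hez : chi e z = -1 := by
      have hsum : (∑ i, e i * z i) = z j := by
        rw [Finset.sum_eq_single j]
        · simp [he]
        · intro i _ hij; simp [he, Pi.single_eq_of_ne hij]
        · intro habs; exact absurd (Finset.mem_univ j) habs
      have hval : (z j).val = 1 := by
        have h2 := ZMod.val_lt (z j)
        have h0 : (z j).val ≠ 0 := fun hv => hj (by rwa [ZMod.val_eq_zero] at hv)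
        omega
      unfold chi
      rw [hsum, hval, pow_one]
    have key : ∑ r : Fin n → ZMod 2, chi r z = ∑ r : Fin n → ZMod 2, chi (r + e) z :=
      (Fintype.sum_equiv (Equiv.addRight e) _ _ (fun r => rfl)).symm
    have hneg : ∑ r : Fin n → ZMod 2, chi (r + e) z = -∑ r : Fin n → ZMod 2, chi r z := by
      rw [← Finset.sum_neg_distrib]
      exact Finset.sum_congr rfl fun r _ => by rw [chi_add_left, hez, mul_neg_one]
    linarith [key.trans hneg]

lemma ft_eq {n : ℕ} (f : (Fin n → ZMod 2) → ℝ) (r : Fin n → ZMod 2) :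
    ft f r = (∑ x : Fin n → ZMod 2, f x * chi r x) / (Fintype.card (Fin n → ZMod 2)) := rfl

lemma add_self_zero {n : ℕ} (x : Fin n → ZMod 2) : x + x = 0 := by
  funext i
  exact CharTwo.add_self_eq_zero _

lemma inversion {n : ℕ} (f : (Fin n → ZMod 2) → ℝ) (x : Fin n → ZMod 2) :
    ∑ r : Fin n → ZMod 2, ft f r * chi r x = f x := by
  have hN : (0 : ℝ) < (Fintype.card (Fin n → ZMod 2) : ℝ) := by
    exact_mod_cast Fintype.card_pos
  calc ∑ r : Fin n → ZMod 2, ft f r * chi r x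
      = (∑ r : Fin n → ZMod 2, ∑ y : Fin n → ZMod 2, f y * chi r (y + x)) /
          (Fintype.card (Fin n → ZMod 2)) := by
        rw [Finset.sum_div]
        refine Finset.sum_congr rfl fun r _ => ?_
        rw [ft_eq, div_mul_eq_mul_div, Finset.sum_mul]
        congr 1
        exact Finset.sum_congr rfl fun y _ => by rw [chi_add_right]; ring
    _ = (∑ y : Fin n → ZMod 2, f y * ∑ r : Fin n → ZMod 2, chi r (y + x)) /
          (Fintype.card (Fin n → ZMod 2)) := by
        rw [Finset.sum_comm]
        congr 1
        exact Finset.sum_congr rfl fun y _ => by rw [Finset.mul_sum]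
    _ = f x := by
        have hterm : ∀ y : Fin n → ZMod 2,
            f y * ∑ r : Fin n → ZMod 2, chi r (y + x)
              = if y = x then f x * (Fintype.card (Fin n → ZMod 2) : ℝ) else 0 := by
          intro y
          rw [sum_chi]
          by_cases hy : y = x
          · subst hy
            simp [add_self_zero]
          · have : y + x ≠ 0 := by
              intro h0
              apply hy
              have := congrArg (· + x) h0
              simpa [add_assoc, add_self_zero] using this
            simp [this, hy]
        simp_rw [hterm]
        rw [Finset.sum_ite_eq' Finset.univ x]
        simp [mul_div_assoc, div_self hN.ne']

lemma ft_cnv {n : ℕ} (f g : (Fin n → ZMod 2) → ℝ) (r : Fin n → ZMod 2) :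
    ft (cnv f g) r = ft f r * ft g r := by
  have key : ∀ y : Fin n → ZMod 2,
      ∑ x : Fin n → ZMod 2, g (x - y) * chi r x
        = (∑ z : Fin n → ZMod 2, g z * chi r z) * chi r y := by
    intro y
    rw [← Fintype.sum_equiv (Equiv.addRight y)
      (fun z => g ((Equiv.addRight y z) - y) * chi r (Equiv.addRight y z))
      (fun x => g (x - y) * chi r x) (fun z => rfl)]
    simp only [Equiv.coe_addRight, add_sub_cancel_right]
    rw [Finset.sum_mul]
    exact Finset.sum_congr rfl fun z _ => by rw [chi_add_right]; ring
  have expand : ∑ x : Fin n → ZMod 2, cnv f g x * chi r x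
      = (∑ y : Fin n → ZMod 2, f y * chi r y) * (∑ z : Fin n → ZMod 2, g z * chi r z) /
          (Fintype.card (Fin n → ZMod 2)) := by
    unfold cnv
    calc ∑ x : Fin n → ZMod 2,
        (∑ y : Fin n → ZMod 2, f y * g (x - y)) / (Fintype.card (Fin n → ZMod 2)) * chi r x
        = (∑ x : Fin n → ZMod 2, ∑ y : Fin n → ZMod 2, f y * g (x - y) * chi r x) /
            (Fintype.card (Fin n → ZMod 2)) := by
          rw [Finset.sum_div]
          refine Finset.sum_congr rfl fun x _ => ?_
          rw [div_mul_eq_mul_div, Finset.sum_mul]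
      _ = (∑ y : Fin n → ZMod 2, f y * ∑ x : Fin n → ZMod 2, g (x - y) * chi r x) /
            (Fintype.card (Fin n → ZMod 2)) := by
          rw [Finset.sum_comm]
          congr 1
          refine Finset.sum_congr rfl fun y _ => ?_
          rw [Finset.mul_sum]
          exact Finset.sum_congr rfl fun x _ => by ring
      _ = _ := by
          simp_rw [key]
          congr 1
          rw [Finset.sum_mul]
          exact Finset.sum_congr rfl fun y _ => by ring
  rw [ft_eq, ft_eq, ft_eq, expand, div_div, div_mul_div_comm]

lemma parseval {n : ℕ} (f : (Fin n → ZMod 2) → ℝ) :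
    ∑ r : Fin n → ZMod 2, ft f r * ft f r
      = (∑ x : Fin n → ZMod 2, f x * f x) / (Fintype.card (Fin n → ZMod 2)) := by
  calc ∑ r : Fin n → ZMod 2, ft f r * ft f r
      = (∑ r : Fin n → ZMod 2, ∑ x : Fin n → ZMod 2, f x * (ft f r * chi r x)) /
          (Fintype.card (Fin n → ZMod 2)) := by
        rw [Finset.sum_div]
        refine Finset.sum_congr rfl fun r _ => ?_
        have hs : ∑ x : Fin n → ZMod 2, f x * (ft f r * chi r x)
            = ft f r * ∑ x : Fin n → ZMod 2, f x * chi r x := by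
          rw [Finset.mul_sum]
          exact Finset.sum_congr rfl fun x _ => by ring
        rw [hs, ft_eq]
        ring
    _ = (∑ x : Fin n → ZMod 2, f x * ∑ r : Fin n → ZMod 2, ft f r * chi r x) /
          (Fintype.card (Fin n → ZMod 2)) := by
        rw [Finset.sum_comm]
        congr 1
        exact Finset.sum_congr rfl fun x _ => by rw [Finset.mul_sum]
    _ = _ := by
        congr 1
        exact Finset.sum_congr rfl fun x _ => by rw [inversion]

theorem bogolyubov_argument {n : ℕ} (A : Finset (Fin n → ZMod 2)) (δ ε : ℝ)
    (hδ : δ ∈ Set.Ioo (0 : ℝ) 1) (hε : ε ∈ Set.Ioo (0 : ℝ) 1) :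
    ∀ x h : Fin n → ZMod 2,
      cnv (cnv (cnv (ind A) (ind A)) (ind A)) (ind A) x ≥ δ * density A ^ 3 →
      (∀ r : Fin n → ZMod 2, |ft (ind A) r| ≥ Real.sqrt (ε / 2) * density A →
        ∑ i, r i * h i = 0) →
      cnv (cnv (cnv (ind A) (ind A)) (ind A)) (ind A) (x + h) ≥ (δ - ε) * density A ^ 3 := by
  intro x h hx hspec
  set α := density A with hα
  set c : (Fin n → ZMod 2) → ℝ := ft (ind A) with hc
  set F : (Fin n → ZMod 2) → ℝ := cnv (cnv (cnv (ind A) (ind A)) (ind A)) (ind A) with hF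
  have hN : (0 : ℝ) < (Fintype.card (Fin n → ZMod 2) : ℝ) := by
    exact_mod_cast Fintype.card_pos
  have hα0 : 0 ≤ α := by
    rw [hα, density]
    positivity
  -- Fourier expansion of F
  have hftF : ∀ r, ft F r = c r ^ 4 := by
    intro r
    rw [hF, ft_cnv, ft_cnv, ft_cnv, ← hc]
    ring
  have hFexp : ∀ z, F z = ∑ r : Fin n → ZMod 2, c r ^ 4 * chi r z := by
    intro z
    rw [← inversion F z]
    exact Finset.sum_congr rfl fun r _ => by rw [hftF]
  -- Parseval gives sum of squares
  have hsumsq : ∑ r : Fin n → ZMod 2, c r * c r = α := by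
    rw [hc, parseval]
    have : ∑ x : Fin n → ZMod 2, ind A x * ind A x = (A.card : ℝ) := by
      have h1 : ∀ x : Fin n → ZMod 2, ind A x * ind A x = if x ∈ A then (1 : ℝ) else 0 := by
        intro x; unfold ind; split <;> simp
      simp_rw [h1]
      rw [Finset.sum_ite_mem, Finset.univ_inter, Finset.sum_const, nsmul_eq_mul, mul_one]
    rw [this, hα, density]
  -- key pointwise bound
  have hε2 : (0 : ℝ) ≤ ε / 2 := by linarith [hε.1]
  have hsq : Real.sqrt (ε / 2) ^ 2 = ε / 2 := Real.sq_sqrt hε2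
  have bound : ∀ r : Fin n → ZMod 2,
      |c r ^ 4 * chi r x * (chi r h - 1)| ≤ ε * α ^ 2 * (c r * c r) := by
    intro r
    by_cases hrh : (∑ i, r i * h i) = 0
    · have h1 : chi r h = 1 := by
        unfold chi; rw [hrh]; simp
      rw [h1]
      simp only [sub_self, mul_zero, abs_zero]
      exact mul_nonneg (mul_nonneg hε.1.le (sq_nonneg α)) (mul_self_nonneg (c r))
    · have hlt : |c r| < Real.sqrt (ε / 2) * α := by
        by_contra hle
        exact hrh (hspec r (le_of_not_gt hle))
      have hcr2 : c r ^ 2 ≤ ε / 2 * α ^ 2 := by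
        have h1 : |c r| * |c r| ≤ (Real.sqrt (ε / 2) * α) * (Real.sqrt (ε / 2) * α) :=
          mul_self_le_mul_self (abs_nonneg _) hlt.le
        calc c r ^ 2 = |c r| * |c r| := by rw [← sq_abs]; ring
          _ ≤ (Real.sqrt (ε / 2) * α) * (Real.sqrt (ε / 2) * α) := h1
          _ = Real.sqrt (ε / 2) ^ 2 * α ^ 2 := by ring
          _ = ε / 2 * α ^ 2 := by rw [hsq]
      have hchx : |chi r x| = 1 := abs_chi r x
      have hchh : |chi r h - 1| ≤ 2 := by
        have := abs_chi r h
        calc |chi r h - 1| ≤ |chi r h| + |(1 : ℝ)| := abs_sub _ _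
          _ = 2 := by rw [this]; norm_num
      have habs : |c r ^ 4 * chi r x * (chi r h - 1)|
          = c r ^ 4 * |chi r x| * |chi r h - 1| := by
        rw [abs_mul, abs_mul, abs_of_nonneg (by positivity : (0:ℝ) ≤ c r ^ 4)]
      rw [habs, hchx, mul_one]
      have h4 : c r ^ 4 ≤ ε / 2 * α ^ 2 * c r ^ 2 := by nlinarith [sq_nonneg (c r)]
      have p1 : c r ^ 4 * |chi r h - 1| ≤ c r ^ 4 * 2 :=
        mul_le_mul_of_nonneg_left hchh (by positivity)
      nlinarith [p1, h4]
  -- the difference bound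
  have hdiff : |F (x + h) - F x| ≤ ε * α ^ 3 := by
    have hrw : F (x + h) - F x
        = ∑ r : Fin n → ZMod 2, c r ^ 4 * chi r x * (chi r h - 1) := by
      rw [hFexp (x + h), hFexp x, ← Finset.sum_sub_distrib]
      exact Finset.sum_congr rfl fun r _ => by rw [chi_add_right]; ring
    rw [hrw]
    calc |∑ r : Fin n → ZMod 2, c r ^ 4 * chi r x * (chi r h - 1)|
        ≤ ∑ r : Fin n → ZMod 2, |c r ^ 4 * chi r x * (chi r h - 1)| :=
          Finset.abs_sum_le_sum_abs _ _
      _ ≤ ∑ r : Fin n → ZMod 2, ε * α ^ 2 * (c r * c r) :=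
          Finset.sum_le_sum fun r _ => bound r
      _ = ε * α ^ 2 * ∑ r : Fin n → ZMod 2, c r * c r := by rw [← Finset.mul_sum]
      _ = ε * α ^ 3 := by rw [hsumsq]; ring
  have := abs_le.mp hdiff
  linarith [this.1]
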